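/- For all positive integers r, t, m with m ≤ C(t,r), there exists a left-compressed r-graph G with t vertices and m edges such that λ(G) = λ^r_{(m,t)}, the maximum of the Lagrangian over all r-graphs with t vertices and m edges. -/

import Mathlib

open Finset


/-- `lagEval E x` is λ(G,x): the sum over the edges of `E` of the product of the
weights (under `x`) of their vertices. -/
def lagEval (E : Finset (Finset ℕ)) (x : ℕ → ℝ) : ℝ :=
  ∑ e ∈ E, ∏ i ∈ e, x i

/-- A feasible weighting: nonnegative entries, finitely supported, total weight 1. -/
def Feasible (x : ℕ → ℝ) : Prop :=
  (∀ i, 0 ≤ x i) ∧ ∃ S : Finset ℕ, (∀ i ∉ S, x i = 0) ∧ ∑ i ∈ S, x i = 1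

/-- A feasible weighting on the vertex set [n] = {1,…,n}. -/
def FeasibleOn (n : ℕ) (x : ℕ → ℝ) : Prop :=
  (∀ i, 0 ≤ x i) ∧ (∀ i ∉ Finset.Icc 1 n, x i = 0) ∧ ∑ i ∈ Finset.Icc 1 n, x i = 1

/-- The Lagrangian λ(G) of a hypergraph with edge set `E`: the supremum (in fact
maximum) of λ(G,x) over all feasible weightings `x`. -/
noncomputable def lagrangian (E : Finset (Finset ℕ)) : ℝ :=
  sSup {y : ℝ | ∃ x : ℕ → ℝ, Feasible x ∧ lagEval E x = y}

/-- `completeG s r` is [s]^{(r)}, the complete r-graph on {1,…,s}. -/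
def completeG (s r : ℕ) : Finset (Finset ℕ) :=
  (Finset.Icc 1 s).powersetCard r

/-- `E` is (the edge set of) an r-graph on the vertex set [n] = {1,…,n}. -/
def IsRGraphOn (r n : ℕ) (E : Finset (Finset ℕ)) : Prop :=
  ∀ e ∈ E, e.card = r ∧ e ⊆ Finset.Icc 1 n

/-- The r-graph `E` contains a clique of order `s` (inside the vertex set `V`):
some `s`-element subset of `V` has all of its `r`-element subsets as edges. -/
def ContainsCliqueOn (V : Finset ℕ) (r s : ℕ) (E : Finset (Finset ℕ)) : Prop :=
  ∃ S : Finset ℕ, S ⊆ V ∧ S.card = s ∧ S.powersetCard r ⊆ E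

/-- `DomLE A B`: `A` and `B` have the same size and, listing both in increasing
order as `i_1 < ⋯ < i_r` and `j_1 < ⋯ < j_r`, one has `i_k ≤ j_k` for all `k`
(equivalently, for every threshold `c`, `A` has at most as many elements above `c`
as `B`). -/
def DomLE (A B : Finset ℕ) : Prop :=
  A.card = B.card ∧
    ∀ c : ℕ, (A.filter fun a => c < a).card ≤ (B.filter fun b => c < b).card

/-- `E` is left-compressed: together with any edge it contains every set of positive
integers dominating it from the left. -/
def LeftCompressed (E : Finset (Finset ℕ)) : Prop :=
  ∀ B ∈ E, ∀ A : Finset ℕ, (∀ a ∈ A, 1 ≤ a) → DomLE A B → A ∈ E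

/-- `nbhd E i` is E_i, the (r-1)-neighborhood of the vertex `i`:
all sets `A` with `i ∉ A` and `A ∪ {i} ∈ E`. -/
def nbhd (E : Finset (Finset ℕ)) (i : ℕ) : Finset (Finset ℕ) :=
  (E.filter fun e => i ∈ e).image fun e => e.erase i

/-- `nbhd2 E i j` is E_{ij}, the (r-2)-neighborhood of the pair of vertices `i, j`. -/
def nbhd2 (E : Finset (Finset ℕ)) (i j : ℕ) : Finset (Finset ℕ) :=
  (E.filter fun e => i ∈ e ∧ j ∈ e).image fun e => (e.erase i).erase j

/-- `C` consists of the first `m` r-element subsets of {1,2,3,…} in the colex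
ordering: it has `m` edges, all of them r-element sets of positive integers, and it
is an initial segment for the colex order. -/
def IsColexSegment (r m : ℕ) (C : Finset (Finset ℕ)) : Prop :=
  C.card = m ∧ (∀ e ∈ C, e.card = r ∧ ∀ a ∈ e, 1 ≤ a) ∧
    ∀ A B : Finset ℕ, A.card = r → (∀ a ∈ A, 1 ≤ a) → B ∈ C →
      toColex A < toColex B → A ∈ C



/-- Replace the element `j` of `e` by `i`. -/
def mv (i j : ℕ) (e : Finset ℕ) : Finset ℕ := insert i (e.erase j)

lemma mem_mv_i {i j : ℕ} {e : Finset ℕ} : i ∈ mv i j e := mem_insert_self _ _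

lemma not_mem_mv_j {i j : ℕ} {e : Finset ℕ} (hij : i ≠ j) : j ∉ mv i j e := by
  simp [mv, hij.symm]

lemma mv_card {i j : ℕ} {e : Finset ℕ} (hij : i ≠ j) (hj : j ∈ e) (hi : i ∉ e) :
    (mv i j e).card = e.card := by
  rw [mv, card_insert_of_notMem (by simp [hi]), card_erase_of_mem hj]
  have : 0 < e.card := card_pos.2 ⟨j, hj⟩
  omega

lemma mv_inv {i j : ℕ} {e : Finset ℕ} (hij : i ≠ j) (hj : j ∈ e) (hi : i ∉ e) :
    insert j ((mv i j e).erase i) = e := by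
  rw [mv, erase_insert (by simp [hi]), insert_erase hj]

lemma mv_injOn {i j : ℕ} (hij : i ≠ j) {e₁ e₂ : Finset ℕ}
    (h1 : j ∈ e₁ ∧ i ∉ e₁) (h2 : j ∈ e₂ ∧ i ∉ e₂) (h : mv i j e₁ = mv i j e₂) : e₁ = e₂ := by
  rw [← mv_inv hij h1.1 h1.2, ← mv_inv hij h2.1 h2.2, h]

/-- The `(i,j)`-compression map on a single edge. -/
def cmv (i j : ℕ) (F : Finset (Finset ℕ)) (e : Finset ℕ) : Finset ℕ :=
  if j ∈ e ∧ i ∉ e ∧ mv i j e ∉ F then mv i j e else e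

/-- The `(i,j)`-compression of a hypergraph. -/
def compF (i j : ℕ) (F : Finset (Finset ℕ)) : Finset (Finset ℕ) := F.image (cmv i j F)

lemma cmv_injOn {i j : ℕ} (hij : i ≠ j) (F : Finset (Finset ℕ)) :
    ∀ e₁ ∈ F, ∀ e₂ ∈ F, cmv i j F e₁ = cmv i j F e₂ → e₁ = e₂ := by
  intro e₁ h₁ e₂ h₂ h
  unfold cmv at h
  split_ifs at h with c1 c2 c2
  · exact mv_injOn hij ⟨c1.1, c1.2.1⟩ ⟨c2.1, c2.2.1⟩ h
  · exact absurd (h ▸ h₂) c1.2.2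
  · exact absurd (h ▸ h₁) c2.2.2
  · exact h

lemma compF_card {i j : ℕ} (hij : i ≠ j) (F : Finset (Finset ℕ)) :
    (compF i j F).card = F.card :=
  card_image_of_injOn (cmv_injOn hij F)

lemma compF_isRGraphOn {r t i j : ℕ} (h1 : 1 ≤ i) (hij : i < j) {F : Finset (Finset ℕ)}
    (hF : IsRGraphOn r t F) : IsRGraphOn r t (compF i j F) := by
  intro e' he'
  obtain ⟨e, he, rfl⟩ := mem_image.1 he'
  obtain ⟨hcard, hsub⟩ := hF e he
  unfold cmv
  split_ifs with c
  · obtain ⟨hj, hi, -⟩ := c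
    refine ⟨by rw [mv_card hij.ne hj hi, hcard], ?_⟩
    intro a ha
    rcases mem_insert.1 ha with rfl | ha
    · have hjt := (mem_Icc.1 (hsub hj)).2
      exact mem_Icc.2 ⟨h1, le_trans hij.le hjt⟩
    · exact hsub (erase_subset _ _ ha)
  · exact ⟨hcard, hsub⟩

/-- total weight of a hypergraph -/
def wt (F : Finset (Finset ℕ)) : ℕ := ∑ e ∈ F, ∑ a ∈ e, 2 ^ a

lemma wt_compF_lt {i j : ℕ} (hij : i < j) {F : Finset (Finset ℕ)} {e₀ : Finset ℕ}
    (he₀ : e₀ ∈ F) (hj₀ : j ∈ e₀) (hi₀ : i ∉ e₀) (hmv₀ : mv i j e₀ ∉ F) :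
    wt (compF i j F) < wt F := by
  have key : ∀ e : Finset ℕ, j ∈ e → i ∉ e →
      (∑ a ∈ mv i j e, 2 ^ a) < ∑ a ∈ e, 2 ^ a := by
    intro e hj hi
    rw [mv, sum_insert (by simp [hi])]
    have h2 : (∑ a ∈ e.erase j, 2 ^ a) + 2 ^ j = ∑ a ∈ e, 2 ^ a :=
      Finset.sum_erase_add _ _ hj
    have : (2:ℕ) ^ i < 2 ^ j := Nat.pow_lt_pow_right one_lt_two hij
    omega
  rw [wt, wt, compF, Finset.sum_image (cmv_injOn hij.ne F)]
  apply Finset.sum_lt_sum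
  · intro e he
    unfold cmv
    split_ifs with c
    · exact (key e c.1 c.2.1).le
    · exact le_rfl
  · refine ⟨e₀, he₀, ?_⟩
    unfold cmv
    rw [if_pos ⟨hj₀, hi₀, hmv₀⟩]
    exact key e₀ hj₀ hi₀

lemma Feasible.le_one {x : ℕ → ℝ} (hx : Feasible x) (k : ℕ) : x k ≤ 1 := by
  obtain ⟨hpos, S, hS0, hS1⟩ := hx
  by_cases hk : k ∈ S
  · calc x k ≤ ∑ i ∈ S, x i := Finset.single_le_sum (fun i _ => hpos i) hk
    _ = 1 := hS1
  · rw [hS0 k hk]; exact zero_le_one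

lemma lagEval_le_card {E : Finset (Finset ℕ)} {x : ℕ → ℝ} (hx : Feasible x) :
    lagEval E x ≤ E.card := by
  rw [lagEval]
  calc ∑ e ∈ E, ∏ i ∈ e, x i ≤ ∑ e ∈ E, (1:ℝ) := by
        apply Finset.sum_le_sum
        intro e _
        exact Finset.prod_le_one (fun i _ => hx.1 i) (fun i _ => hx.le_one i)
    _ = E.card := by simp

lemma feasible_single : Feasible (fun k => if k = 1 then (1:ℝ) else 0) := by
  constructor
  · intro i; dsimp only; split_ifs <;> norm_num
  · exact ⟨{1}, fun i hi => by simp at hi; simp [hi], by simp⟩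

lemma valSet_nonempty (E : Finset (Finset ℕ)) :
    {y : ℝ | ∃ x : ℕ → ℝ, Feasible x ∧ lagEval E x = y}.Nonempty :=
  ⟨_, _, feasible_single, rfl⟩

lemma valSet_bddAbove (E : Finset (Finset ℕ)) :
    BddAbove {y : ℝ | ∃ x : ℕ → ℝ, Feasible x ∧ lagEval E x = y} := by
  refine ⟨E.card, ?_⟩
  rintro v ⟨x, hx, rfl⟩
  exact lagEval_le_card hx

lemma le_lagrangian {E : Finset (Finset ℕ)} {x : ℕ → ℝ} (hx : Feasible x) :
    lagEval E x ≤ lagrangian E :=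
  le_csSup (valSet_bddAbove E) ⟨x, hx, rfl⟩

lemma lagrangian_le {E : Finset (Finset ℕ)} {c : ℝ}
    (h : ∀ x : ℕ → ℝ, Feasible x → lagEval E x ≤ c) : lagrangian E ≤ c := by
  apply csSup_le (valSet_nonempty E)
  rintro v ⟨x, hx, rfl⟩
  exact h x hx

lemma prod_swap_congr {i j : ℕ} {x : ℕ → ℝ} {s : Finset ℕ} (hi : i ∉ s) (hj : j ∉ s) :
    ∏ k ∈ s, x (Equiv.swap i j k) = ∏ k ∈ s, x k := by
  apply Finset.prod_congr rfl
  intro k hk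
  have h1 : k ≠ i := fun h => hi (h ▸ hk)
  have h2 : k ≠ j := fun h => hj (h ▸ hk)
  rw [Equiv.swap_apply_of_ne_of_ne h1 h2]

lemma feasible_swap {i j : ℕ} {x : ℕ → ℝ} (hx : Feasible x) :
    Feasible (fun k => x (Equiv.swap i j k)) := by
  obtain ⟨hpos, S, hS0, hS1⟩ := hx
  refine ⟨fun k => hpos _, insert i (insert j S), ?_, ?_⟩
  · intro k hk
    simp only [mem_insert, not_or] at hk
    show x (Equiv.swap i j k) = 0
    rw [Equiv.swap_apply_of_ne_of_ne hk.1 hk.2.1]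
    exact hS0 k hk.2.2
  · have himg : (insert i (insert j S)).image (Equiv.swap i j) = insert i (insert j S) := by
      ext a
      simp only [mem_image]
      constructor
      · rintro ⟨b, hb, rfl⟩
        rcases eq_or_ne b i with rfl | hbi
        · simp [Equiv.swap_apply_left]
        rcases eq_or_ne b j with rfl | hbj
        · simp [Equiv.swap_apply_right]
        · rwa [Equiv.swap_apply_of_ne_of_ne hbi hbj]
      · intro ha
        refine ⟨Equiv.swap i j a, ?_, Equiv.swap_apply_self i j a⟩
        rcases eq_or_ne a i with rfl | hai
        · simp [Equiv.swap_apply_left]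
        rcases eq_or_ne a j with rfl | haj
        · simp [Equiv.swap_apply_right]
        · rwa [Equiv.swap_apply_of_ne_of_ne hai haj]
    have h1 : ∑ k ∈ insert i (insert j S), x (Equiv.swap i j k)
        = ∑ k ∈ (insert i (insert j S)).image (Equiv.swap i j), x k :=
      (Finset.sum_image (fun a _ b _ h => (Equiv.swap i j).injective h)).symm
    show ∑ k ∈ insert i (insert j S), x (Equiv.swap i j k) = 1
    rw [h1, himg, ← hS1]
    exact Finset.sum_subset (fun a ha => by simp [mem_insert, ha])
      (fun a _ ha => hS0 a ha) |>.symm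

lemma key_ineq {i j : ℕ} (hij : i < j) (F : Finset (Finset ℕ)) {x : ℕ → ℝ}
    (hx : Feasible x) :
    ∃ y : ℕ → ℝ, Feasible y ∧ lagEval F x ≤ lagEval (compF i j F) y := by
  have hne : i ≠ j := hij.ne
  have hrw : ∀ z : ℕ → ℝ, lagEval (compF i j F) z = ∑ e ∈ F, ∏ k ∈ cmv i j F e, z k := by
    intro z
    rw [lagEval, compF, Finset.sum_image (cmv_injOn hne F)]
  by_cases hxij : x j ≤ x i
  · -- no swap needed
    refine ⟨x, hx, ?_⟩
    rw [hrw, lagEval]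
    apply Finset.sum_le_sum
    intro e _
    unfold cmv
    split_ifs with c
    · obtain ⟨hj, hi, -⟩ := c
      rw [mv, Finset.prod_insert (fun h => hi (erase_subset _ _ h)),
        ← Finset.mul_prod_erase e x hj]
      exact mul_le_mul_of_nonneg_right hxij (Finset.prod_nonneg fun k _ => hx.1 k)
    · exact le_rfl
  · -- swap i and j
    push_neg at hxij
    set y : ℕ → ℝ := fun k => x (Equiv.swap i j k) with hy
    have hyi : y i = x j := by simp [hy, Equiv.swap_apply_left]
    have hyj : y j = x i := by simp [hy, Equiv.swap_apply_right]
    have hyfeas : Feasible y := feasible_swap hx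
    refine ⟨y, hyfeas, ?_⟩
    rw [hrw, lagEval]
    set Qb := F.filter (fun e => j ∈ e ∧ i ∉ e ∧ mv i j e ∈ F) with hQb
    set D := Qb ∪ Qb.image (mv i j) with hD
    have hQbF : Qb ⊆ F := filter_subset _ _
    have hDF : D ⊆ F := by
      rw [hD]
      apply union_subset hQbF
      intro e' he'
      obtain ⟨e, he, rfl⟩ := mem_image.1 he'
      exact ((mem_filter.1 he).2).2.2
    have hdisj : Disjoint Qb (Qb.image (mv i j)) := by
      rw [Finset.disjoint_left]
      intro e he he'
      obtain ⟨f, hf, rfl⟩ := mem_image.1 he'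
      exact ((mem_filter.1 he).2).2.1 mem_mv_i
    have hmvinj : ∀ e₁ ∈ Qb, ∀ e₂ ∈ Qb, mv i j e₁ = mv i j e₂ → e₁ = e₂ := by
      intro e₁ h₁ e₂ h₂ h
      obtain ⟨-, hj1, hi1, -⟩ := mem_filter.1 h₁
      obtain ⟨-, hj2, hi2, -⟩ := mem_filter.1 h₂
      exact mv_injOn hne ⟨hj1, hi1⟩ ⟨hj2, hi2⟩ h
    rw [← Finset.sum_sdiff (f := fun e => ∏ k ∈ e, x k) hDF,
      ← Finset.sum_sdiff (f := fun e => ∏ k ∈ cmv i j F e, y k) hDF]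
    apply add_le_add
    · -- edges outside D : termwise
      apply Finset.sum_le_sum
      intro e he
      have heF : e ∈ F := (sdiff_subset) he
      have heQb : e ∉ Qb := fun h => (mem_sdiff.1 he).2 (subset_union_left h)
      unfold cmv
      split_ifs with c
      · -- moved edge : equality
        obtain ⟨hje, hie, -⟩ := c
        rw [mv, Finset.prod_insert (fun h => hie (erase_subset _ _ h)), hyi,
          prod_swap_congr (fun h => hie (erase_subset _ _ h)) (notMem_erase _ _),
          ← Finset.mul_prod_erase e x hje]
      · -- unmoved
        have hcond : ¬(j ∈ e ∧ i ∉ e) := by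
          intro hc
          by_cases hmvF : mv i j e ∈ F
          · exact heQb (mem_filter.2 ⟨heF, hc.1, hc.2, hmvF⟩)
          · exact c ⟨hc.1, hc.2, hmvF⟩
        by_cases hie : i ∈ e
        · by_cases hje : j ∈ e
          · -- both: equality
            have hje' : j ∈ e.erase i := mem_erase.2 ⟨hne.symm, hje⟩
            rw [← Finset.mul_prod_erase e y hie, ← Finset.mul_prod_erase _ y hje',
              ← Finset.mul_prod_erase e x hie, ← Finset.mul_prod_erase _ x hje',
              prod_swap_congr (fun h => (notMem_erase i e) (erase_subset _ _ h))
                (notMem_erase _ _), hyi, hyj]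
            ring_nf
            exact le_rfl
          · -- i only : gain
            rw [← Finset.mul_prod_erase e y hie, ← Finset.mul_prod_erase e x hie, hyi,
              prod_swap_congr (notMem_erase _ _) (fun h => hje (erase_subset _ _ h))]
            exact mul_le_mul_of_nonneg_right hxij.le
              (Finset.prod_nonneg fun k _ => hx.1 k)
        · have hje : j ∉ e := fun h => hcond ⟨h, hie⟩
          rw [prod_swap_congr hie hje]

    · -- edges in D : total equality
      have hsplit : ∀ z : ℕ → ℝ,
          ∑ e ∈ D, ∏ k ∈ e, z k
            = ∑ e ∈ Qb, (∏ k ∈ e, z k + ∏ k ∈ mv i j e, z k) := by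
        intro z
        rw [hD, Finset.sum_union hdisj, Finset.sum_image hmvinj, ← Finset.sum_add_distrib]
      have hcmvD : ∀ e ∈ D, cmv i j F e = e := by
        intro e he
        rcases mem_union.1 he with h | h
        · have := (mem_filter.1 h).2
          unfold cmv
          rw [if_neg (by tauto)]
        · obtain ⟨f, hf, rfl⟩ := mem_image.1 h
          unfold cmv
          rw [if_neg (by intro hc; exact hc.2.1 mem_mv_i)]
      have hDrw : ∑ e ∈ D, ∏ k ∈ cmv i j F e, y k = ∑ e ∈ D, ∏ k ∈ e, y k :=
        Finset.sum_congr rfl (fun e he => by rw [hcmvD e he])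
      rw [hDrw, hsplit y, hsplit x]
      apply le_of_eq
      apply Finset.sum_congr rfl
      intro e he
      obtain ⟨-, hje, hie, -⟩ := mem_filter.1 he
      have h1 : i ∉ e.erase j := fun h => hie (erase_subset _ _ h)
      rw [mv, Finset.prod_insert h1, Finset.prod_insert h1,
        ← Finset.mul_prod_erase e x hje, ← Finset.mul_prod_erase e y hje,
        prod_swap_congr h1 (notMem_erase _ _), hyi, hyj]
      ring

lemma lagrangian_le_compF {i j : ℕ} (hij : i < j) (F : Finset (Finset ℕ)) :
    lagrangian F ≤ lagrangian (compF i j F) := by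
  apply lagrangian_le
  intro x hx
  obtain ⟨y, hy, hle⟩ := key_ineq hij F hx
  exact hle.trans (le_lagrangian hy)

/-- counting complements -/
lemma count_compl {A : Finset ℕ} (c : ℕ) :
    (A.filter fun a => c < a).card + (A.filter fun a => ¬ c < a).card = A.card :=
  Finset.card_filter_add_card_filter_not _

lemma min_sdiff_lt {A B : Finset ℕ} (hdom : DomLE A B) (hA : (A \ B).Nonempty)
    (hB : (B \ A).Nonempty) : (A \ B).min' hA < (B \ A).min' hB := by
  set i := (A \ B).min' hA with hi
  set j := (B \ A).min' hB with hj
  have hiA : i ∈ A \ B := min'_mem _ _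
  have hjB : j ∈ B \ A := min'_mem _ _
  rw [mem_sdiff] at hiA hjB
  by_contra hlt
  push_neg at hlt   -- j ≤ i
  have hji : j < i := lt_of_le_of_ne hlt (fun h => hjB.2 (h ▸ hiA.1))
  -- A.filter (≤ j) ⊂ B.filter (≤ j)
  have hsub : A.filter (fun a => ¬ j < a) ⊆ B.filter (fun a => ¬ j < a) := by
    intro a ha
    rw [mem_filter] at ha ⊢
    refine ⟨?_, ha.2⟩
    by_contra haB
    have : i ≤ a := min'_le _ _ (mem_sdiff.2 ⟨ha.1, haB⟩)
    omega
  have hssub : A.filter (fun a => ¬ j < a) ⊂ B.filter (fun a => ¬ j < a) :=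
    (Finset.ssubset_iff_of_subset hsub).2
      ⟨j, mem_filter.2 ⟨hjB.1, by omega⟩, fun h => hjB.2 (mem_filter.1 h).1⟩
  have h1 := Finset.card_lt_card hssub
  have h2 := count_compl (A := A) j
  have h3 := count_compl (A := B) j
  have h4 := hdom.2 j
  have h5 := hdom.1
  omega

lemma domLE_mv {A B : Finset ℕ} (hdom : DomLE A B) (hA : (A \ B).Nonempty)
    (hB : (B \ A).Nonempty) :
    DomLE A (mv ((A \ B).min' hA) ((B \ A).min' hB) B) := by
  set i := (A \ B).min' hA with hi
  set j := (B \ A).min' hB with hj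
  have hiA : i ∈ A \ B := min'_mem _ _
  have hjB : j ∈ B \ A := min'_mem _ _
  rw [mem_sdiff] at hiA hjB
  have hij : i < j := min_sdiff_lt hdom hA hB
  constructor
  · rw [mv_card hij.ne hjB.1 hiA.2]
    exact hdom.1
  · intro c
    rcases lt_or_ge c i with hc | hc
    · -- c < i : counts equal
      have : (mv i j B).filter (fun a => c < a)
          = insert i ((B.filter (fun a => c < a)).erase j) := by
        ext a
        simp only [mv, mem_filter, mem_insert, mem_erase]
        constructor
        · rintro ⟨rfl | ⟨haj, haB⟩, hca⟩
          · exact Or.inl rfl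
          · exact Or.inr ⟨haj, haB, hca⟩
        · rintro (rfl | ⟨haj, haB, hca⟩)
          · exact ⟨Or.inl rfl, hc⟩
          · exact ⟨Or.inr ⟨haj, haB⟩, hca⟩
      rw [this, card_insert_of_notMem (fun h => hiA.2 (mem_filter.1 (erase_subset _ _ h)).1),
        card_erase_of_mem (mem_filter.2 ⟨hjB.1, by omega⟩)]
      have h4 := hdom.2 c
      have hjc : j ∈ B.filter (fun a => c < a) := mem_filter.2 ⟨hjB.1, by omega⟩
      have : 0 < (B.filter (fun a => c < a)).card := card_pos.2 ⟨j, hjc⟩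
      omega
    · rcases lt_or_ge c j with hcj | hcj
      · -- i ≤ c < j : strict inequality needed
        have heq : (mv i j B).filter (fun a => c < a)
            = (B.filter (fun a => c < a)).erase j := by
          ext a
          simp only [mv, mem_filter, mem_insert, mem_erase]
          constructor
          · rintro ⟨rfl | ⟨haj, haB⟩, hca⟩
            · omega
            · exact ⟨haj, haB, hca⟩
          · rintro ⟨haj, haB, hca⟩
            exact ⟨Or.inr ⟨haj, haB⟩, hca⟩
        rw [heq, card_erase_of_mem (mem_filter.2 ⟨hjB.1, by omega⟩)]
        -- need strict: A-count < B-count, via complements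
        have hsub : B.filter (fun a => ¬ c < a) ⊆ A.filter (fun a => ¬ c < a) := by
          intro b hb
          rw [mem_filter] at hb ⊢
          refine ⟨?_, hb.2⟩
          by_contra hbA
          have : j ≤ b := min'_le _ _ (mem_sdiff.2 ⟨hb.1, hbA⟩)
          omega
        have hssub : B.filter (fun a => ¬ c < a) ⊂ A.filter (fun a => ¬ c < a) :=
          (Finset.ssubset_iff_of_subset hsub).2
            ⟨i, mem_filter.2 ⟨hiA.1, by omega⟩, fun h => hiA.2 (mem_filter.1 h).1⟩
        have h1 := Finset.card_lt_card hssub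
        have h2 := count_compl (A := A) c
        have h3 := count_compl (A := B) c
        have h5 := hdom.1
        omega
      · -- j ≤ c : counts equal
        have heq : (mv i j B).filter (fun a => c < a) = B.filter (fun a => c < a) := by
          ext a
          simp only [mv, mem_filter, mem_insert, mem_erase]
          constructor
          · rintro ⟨rfl | ⟨haj, haB⟩, hca⟩
            · omega
            · exact ⟨haB, hca⟩
          · rintro ⟨haB, hca⟩
            exact ⟨Or.inr ⟨by omega, haB⟩, hca⟩
        rw [heq]
        exact hdom.2 c

lemma chain_lemma {E : Finset (Finset ℕ)}
    (hstab : ∀ e ∈ E, ∀ i j : ℕ, 1 ≤ i → i < j → j ∈ e → i ∉ e → mv i j e ∈ E) :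
    ∀ n : ℕ, ∀ A B : Finset ℕ, (A \ B).card ≤ n → B ∈ E → (∀ a ∈ A, 1 ≤ a) →
      DomLE A B → A ∈ E := by
  intro n
  induction n with
  | zero =>
    intro A B hcard hB _ hdom
    have : A \ B = ∅ := card_eq_zero.1 (Nat.le_zero.1 hcard)
    have hsub : A ⊆ B := sdiff_eq_empty_iff_subset.1 this
    have : A = B := Finset.eq_of_subset_of_card_le hsub (le_of_eq hdom.1.symm)
    exact this ▸ hB
  | succ n ih =>
    intro A B hcard hB hpos hdom
    by_cases hAB : A ⊆ B
    · have : A = B := Finset.eq_of_subset_of_card_le hAB (le_of_eq hdom.1.symm)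
      exact this ▸ hB
    · have hA : (A \ B).Nonempty := by
        rw [sdiff_nonempty]; exact hAB
      have hBne : (B \ A).Nonempty := by
        rw [sdiff_nonempty]
        intro hBA
        exact hAB (by rw [Finset.eq_of_subset_of_card_le hBA (le_of_eq hdom.1)])
      set i := (A \ B).min' hA with hi
      set j := (B \ A).min' hBne with hj
      have hiA : i ∈ A \ B := min'_mem _ _
      have hjB : j ∈ B \ A := min'_mem _ _
      rw [mem_sdiff] at hiA hjB
      have hij : i < j := min_sdiff_lt hdom hA hBne
      have hB' : mv i j B ∈ E := hstab B hB i j (hpos i hiA.1) hij hjB.1 hiA.2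
      have hdom' : DomLE A (mv i j B) := domLE_mv hdom hA hBne
      have hsd : A \ mv i j B = (A \ B).erase i := by
        ext a
        simp only [mem_sdiff, mem_erase, mv, mem_insert]
        constructor
        · rintro ⟨haA, ha⟩
          push_neg at ha
          have haj : a ≠ j := fun h => hjB.2 (h ▸ haA)
          refine ⟨ha.1, haA, fun haB => ha.2 haj haB⟩
        · rintro ⟨hai, haA, haB⟩
          refine ⟨haA, ?_⟩
          rintro (rfl | ⟨-, hc⟩)
          · exact hai rfl
          · exact haB hc
      have hcard' : (A \ mv i j B).card ≤ n := by
        rw [hsd, card_erase_of_mem (mem_sdiff.2 hiA)]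
        omega
      exact ih A (mv i j B) hcard' hB' hpos hdom'

/-- There is a left-compressed r-graph with `t` vertices and `m` edges whose
Lagrangian is `λ^r_{(m,t)}`, the maximum Lagrangian over all r-graphs with `t`
vertices and `m` edges. -/
theorem stmt9 (r t m : ℕ) (hr : 0 < r) (ht : 0 < t) (hm : 0 < m)
    (hmt : m ≤ t.choose r) :
    ∃ E : Finset (Finset ℕ), IsRGraphOn r t E ∧ E.card = m ∧ LeftCompressed E ∧
      lagrangian E = sSup {y : ℝ | ∃ F : Finset (Finset ℕ),
        IsRGraphOn r t F ∧ F.card = m ∧ lagrangian F = y} := by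
  classical
  set 𝒢 : Finset (Finset (Finset ℕ)) := (completeG t r).powersetCard m with h𝒢
  have hmem : ∀ F : Finset (Finset ℕ), F ∈ 𝒢 ↔ IsRGraphOn r t F ∧ F.card = m := by
    intro F
    rw [h𝒢, mem_powersetCard]
    constructor
    · rintro ⟨hsub, hcard⟩
      refine ⟨fun e he => ?_, hcard⟩
      have := hsub he
      rw [completeG, mem_powersetCard] at this
      exact ⟨this.2, this.1⟩
    · rintro ⟨hgraph, hcard⟩
      refine ⟨fun e he => ?_, hcard⟩
      rw [completeG, mem_powersetCard]
      exact ⟨(hgraph e he).2, (hgraph e he).1⟩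
  have h𝒢ne : 𝒢.Nonempty := by
    rw [h𝒢, Finset.powersetCard_nonempty, completeG, Finset.card_powersetCard, Nat.card_Icc]
    simpa using hmt
  obtain ⟨E0, hE0, hmax⟩ := Finset.exists_max_image 𝒢 lagrangian h𝒢ne
  set M := lagrangian E0 with hM
  set 𝒢' := 𝒢.filter (fun F => lagrangian F = M) with h𝒢'
  have h𝒢'ne : 𝒢'.Nonempty := ⟨E0, mem_filter.2 ⟨hE0, rfl⟩⟩
  obtain ⟨E, hE, hmin⟩ := Finset.exists_min_image 𝒢' wt h𝒢'ne
  rw [h𝒢', mem_filter] at hE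
  obtain ⟨hE𝒢, hEl⟩ := hE
  obtain ⟨hEgraph, hEcard⟩ := (hmem E).1 hE𝒢
  have hstab : ∀ e ∈ E, ∀ i j : ℕ, 1 ≤ i → i < j → j ∈ e → i ∉ e → mv i j e ∈ E := by
    intro e he i j h1 hij hje hie
    by_contra hmv
    have hcomp𝒢 : compF i j E ∈ 𝒢 :=
      (hmem _).2 ⟨compF_isRGraphOn h1 hij hEgraph, by rw [compF_card hij.ne, hEcard]⟩
    have hle : lagrangian (compF i j E) ≤ M := hmax _ hcomp𝒢
    have hge : M ≤ lagrangian (compF i j E) := hEl ▸ lagrangian_le_compF hij E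
    have hcomp𝒢' : compF i j E ∈ 𝒢' := mem_filter.2 ⟨hcomp𝒢, le_antisymm hle hge⟩
    have h1' := hmin _ hcomp𝒢'
    have h2' := wt_compF_lt hij he hje hie hmv
    omega
  refine ⟨E, hEgraph, hEcard, ?_, ?_⟩
  · intro B hB A hpos hdom
    exact chain_lemma hstab (A \ B).card A B le_rfl hB hpos hdom
  · have hgreat : IsGreatest {y : ℝ | ∃ F : Finset (Finset ℕ),
        IsRGraphOn r t F ∧ F.card = m ∧ lagrangian F = y} M := by
      constructor
      · exact ⟨E0, ((hmem E0).1 hE0).1, ((hmem E0).1 hE0).2, rfl⟩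
      · rintro y ⟨F, hFg, hFc, rfl⟩
        exact hmax F ((hmem F).2 ⟨hFg, hFc⟩)
    rw [hgreat.csSup_eq, hEl]
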